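/- Let D be a multi-relational database and let ℋ be a family of at least two pairwise distinct maximal complete connected subsets (MCCSs) of D such that X = ⋂_{H ∈ ℋ} H is nonempty and is itself a complete connected subset. Then g(X) = X, yet X is not a maximal complete connected subset. -/

import Mathlib

/-- A multi-relational database over a finite entity set E: entities are
partitioned into k types by t; RT is the set of relationship types (unordered
pairs of distinct types); rel is the union of the binary relationships
(unordered pairs of entities whose pair of types is a relationship type). -/
structure MRD (E : Type*) (k : ℕ) where
  t : E → Fin k
  RT : Set (Sym2 (Fin k))
  RT_not_diag : ∀ p ∈ RT, ¬ p.IsDiag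
  rel : Set (Sym2 E)
  rel_types : ∀ p ∈ rel, p.map t ∈ RT

namespace MRD

variable {E : Type*} {k : ℕ}

/-- A set F is complete if any two of its entities whose pair of types is a
relationship type are related. -/
def Complete (D : MRD E k) (F : Set E) : Prop :=
  ∀ e ∈ F, ∀ e' ∈ F, s(D.t e, D.t e') ∈ D.RT → s(e, e') ∈ D.rel

/-- A set F is connected if any two of its elements are joined by a path inside
F whose consecutive elements form pairs in rel. -/
def Connected (D : MRD E k) (F : Set E) : Prop :=
  ∀ e ∈ F, ∀ e' ∈ F,
    Relation.ReflTransGen (fun a b => a ∈ F ∧ b ∈ F ∧ s(a, b) ∈ D.rel) e e'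

/-- A complete connected subset. -/
def CCS (D : MRD E k) (F : Set E) : Prop :=
  D.Complete F ∧ D.Connected F

/-- A maximal complete connected subset: a CCS to which no element can be added
remaining a CCS. -/
def MCCS (D : MRD E k) (F : Set E) : Prop :=
  D.CCS F ∧ ∀ e : E, D.CCS (insert e F) → e ∈ F

/-- Comp(F): the entities whose addition keeps F complete. -/
def Comp (D : MRD E k) (F : Set E) : Set E :=
  {e | D.Complete (insert e F)}

/-- Aug(F): the entities whose addition keeps F a CCS. -/
def Aug (D : MRD E k) (F : Set E) : Set E :=
  {e | D.CCS (insert e F)}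

/-- The operator g. -/
def g (D : MRD E k) (F : Set E) : Set E :=
  {e ∈ D.Aug F | D.Comp (insert e F) = D.Comp F}

end MRD

section ProofAux

variable {E : Type*} {k : ℕ}

private lemma MRD.complete_mono (D : MRD E k) {A B : Set E} (hAB : A ⊆ B)
    (hB : D.Complete B) : D.Complete A :=
  fun e he e' he' h => hB e (hAB he) e' (hAB he') h

private lemma MRD.step_symm (D : MRD E k) (F : Set E) :
    Symmetric (fun a b => a ∈ F ∧ b ∈ F ∧ s(a, b) ∈ D.rel) := by
  rintro a b ⟨h1, h2, h3⟩
  exact ⟨h2, h1, by rwa [Sym2.eq_swap]⟩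

private lemma MRD.path_mono (D : MRD E k) {A B : Set E} (hAB : A ⊆ B) {a b : E}
    (h : Relation.ReflTransGen (fun a b => a ∈ A ∧ b ∈ A ∧ s(a, b) ∈ D.rel) a b) :
    Relation.ReflTransGen (fun a b => a ∈ B ∧ b ∈ B ∧ s(a, b) ∈ D.rel) a b :=
  Relation.ReflTransGen.mono (fun _ _ ⟨h1, h2, h3⟩ => ⟨hAB h1, hAB h2, h3⟩) _ _ h

end ProofAux

/-- if H is a family of at least two pairwise distinct MCCSs of D
whose intersection X is nonempty and is itself a CCS, then g(X) = X, yet X is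
not an MCCS. -/

theorem g_fixpoint_not_maximal {E : Type*} [Fintype E] {k : ℕ} (D : MRD E k)
    (H : Set (Set E)) (hH : ∀ F ∈ H, D.MCCS F)
    (htwo : ∃ F₁ ∈ H, ∃ F₂ ∈ H, F₁ ≠ F₂)
    (X : Set E) (hX : X = ⋂₀ H) (hXne : X.Nonempty) (hXccs : D.CCS X) :
    D.g X = X ∧ ¬ D.MCCS X := by
  have hXsub : ∀ F ∈ H, X ⊆ F := by
    intro F hF
    rw [hX]; exact Set.sInter_subset_of_mem hF
  obtain ⟨x, hx⟩ := hXne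
  constructor
  · -- g X = X
    ext e
    constructor
    · rintro ⟨haug, hcomp⟩
      rw [hX]
      intro F hF
      obtain ⟨⟨hFc, hFconn⟩, hFmax⟩ := hH F hF
      -- F ⊆ Comp X
      have hFsubComp : F ⊆ D.Comp X := by
        intro a ha
        exact D.complete_mono (Set.insert_subset ha (hXsub F hF)) hFc
      apply hFmax
      constructor
      · -- complete
        intro u hu v hv hrt
        rcases hu with rfl | hu
        · rcases hv with rfl | hv
          · exact absurd (D.RT_not_diag _ hrt) (by simp)
          · have hv' : v ∈ D.Comp (insert u X) := hcomp ▸ hFsubComp hv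
            exact hv' u (Set.mem_insert_iff.mpr (Or.inr (Set.mem_insert u X)))
              v (Set.mem_insert v _) hrt
        · rcases hv with rfl | hv
          · have hu' : u ∈ D.Comp (insert v X) := hcomp ▸ hFsubComp hu
            exact hu' u (Set.mem_insert u _)
              v (Set.mem_insert_iff.mpr (Or.inr (Set.mem_insert v X))) hrt
          · exact hFc u hu v hv hrt
      · -- connected
        have hsub1 : insert e X ⊆ insert e F :=
          Set.insert_subset_insert (hXsub F hF)
        have hreach : ∀ a ∈ insert e F,
            Relation.ReflTransGen
              (fun a b => a ∈ insert e F ∧ b ∈ insert e F ∧ s(a, b) ∈ D.rel) a x := by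
          rintro a (rfl | ha)
          · exact D.path_mono hsub1
              (haug.2 a (Set.mem_insert a X) x (Set.mem_insert_of_mem _ hx))
          · exact D.path_mono (Set.subset_insert e F)
              (hFconn a ha x (hXsub F hF hx))
        intro u hu v hv
        exact (hreach u hu).trans
          ((@Relation.ReflTransGen.symmetric _ _ ⟨D.step_symm _⟩).symm _ _ (hreach v hv))
    · intro he
      have : insert e X = X := Set.insert_eq_self.mpr he
      exact ⟨by simp only [MRD.Aug, Set.mem_setOf_eq, this]; exact hXccs,
        by simp only [MRD.Comp, this]⟩
  · -- ¬ MCCS X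
    obtain ⟨F₁, hF₁, F₂, hF₂, hne⟩ := htwo
    have hF : ∃ F ∈ H, X ≠ F := by
      by_contra h
      push_neg at h
      exact hne ((h F₁ hF₁).symm.trans (h F₂ hF₂))
    obtain ⟨F, hFH, hXF⟩ := hF
    obtain ⟨⟨hFc, hFconn⟩, -⟩ := hH F hFH
    obtain ⟨e', he'F, he'X⟩ : ∃ e', e' ∈ F ∧ e' ∉ X := by
      by_contra h
      push_neg at h
      exact hXF (Set.Subset.antisymm (hXsub F hFH) h)
    -- path from e' to x inside F; find last vertex outside X adjacent to X
    have hpath := hFconn e' he'F x (hXsub F hFH hx)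
    have key : ∀ a : E,
        Relation.ReflTransGen (fun a b => a ∈ F ∧ b ∈ F ∧ s(a, b) ∈ D.rel) a x →
        (a ∈ X ∨ ∃ e, e ∈ F ∧ e ∉ X ∧ ∃ y ∈ X, s(e, y) ∈ D.rel) := by
      intro a hpa
      induction hpa using Relation.ReflTransGen.head_induction_on with
      | refl => exact Or.inl hx
      | head hstep _ ih =>
        rename_i b c _
        obtain ⟨hbF, hcF, hbc⟩ := hstep
        rcases ih with hcX | hwit
        · by_cases hbX : b ∈ X
          · exact Or.inl hbX
          · exact Or.inr ⟨b, hbF, hbX, c, hcX, hbc⟩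
        · exact Or.inr hwit
    rcases key e' hpath with h | ⟨e, heF, heX, y, hyX, hey⟩
    · exact absurd h he'X
    · rintro ⟨-, hmax⟩
      apply heX
      apply hmax
      constructor
      · exact D.complete_mono (Set.insert_subset heF (hXsub F hFH)) hFc
      · have hreach : ∀ a ∈ insert e X,
            Relation.ReflTransGen
              (fun a b => a ∈ insert e X ∧ b ∈ insert e X ∧ s(a, b) ∈ D.rel) a y := by
          rintro a (rfl | ha)
          · exact Relation.ReflTransGen.single
              ⟨Set.mem_insert a X, Set.mem_insert_of_mem _ hyX, hey⟩
          · exact D.path_mono (Set.subset_insert e X) (hXccs.2 a ha y hyX)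
        intro u hu v hv
        exact (hreach u hu).trans
          ((@Relation.ReflTransGen.symmetric _ _ ⟨D.step_symm _⟩).symm _ _ (hreach v hv))
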